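/- Define δ(θ) = 1/(2 sin θ) + (sin θ)/2 − 1 and λ₀(θ) = (2/π)(π − 2θ − sin 2θ) for θ ∈ (0, π/2). Then θ is a critical point of θ ↦ δ(θ)/λ₀(θ)² if and only if 8 sin θ (1 − sin θ)² − cos θ (π − 2θ − sin 2θ) = 0. -/

import Mathlib

open Real

/-- Criticality of `δ(θ)/λ₀(θ)²` for stadia is equivalent to the equation
`8 sin θ (1 - sin θ)² - cos θ (π - 2θ - sin 2θ) = 0`. -/
theorem stmt_17 (θ : ℝ) (hθ : θ ∈ Set.Ioo 0 (Real.pi/2)) :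
    deriv (fun t : ℝ =>
        (1 / (2 * Real.sin t) + Real.sin t / 2 - 1) /
          ((2 / Real.pi) * (Real.pi - 2*t - Real.sin (2*t)))^2) θ = 0 ↔
      8 * Real.sin θ * (1 - Real.sin θ)^2
        - Real.cos θ * (Real.pi - 2*θ - Real.sin (2*θ)) = 0 := by
  obtain ⟨h0, h1⟩ := hθ
  have hpi : Real.pi ≠ 0 := Real.pi_ne_zero
  have hs : 0 < Real.sin θ := Real.sin_pos_of_pos_of_lt_pi h0 (h1.trans (by linarith [Real.pi_pos]))
  have hc : 0 < Real.cos θ := Real.cos_pos_of_mem_Ioo ⟨by linarith [Real.pi_pos], h1⟩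
  have hg : 0 < Real.pi - 2*θ - Real.sin (2*θ) := by
    have h2 : Real.sin (2*θ) = Real.sin (Real.pi - 2*θ) := (Real.sin_pi_sub _).symm
    have hlt : Real.sin (Real.pi - 2*θ) < Real.pi - 2*θ := Real.sin_lt (by linarith)
    linarith [h2 ▸ hlt]
  have hsne : Real.sin θ ≠ 0 := ne_of_gt hs
  have hden : (2 * Real.sin θ) ≠ 0 := by positivity
  have hgne : Real.pi - 2*θ - Real.sin (2*θ) ≠ 0 := ne_of_gt hg
  have hq0 : ((2 / Real.pi) * (Real.pi - 2*θ - Real.sin (2*θ)))^2 ≠ 0 := by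
    have : (2:ℝ)/Real.pi ≠ 0 := by positivity
    positivity
  -- derivatives
  have h2t : HasDerivAt (fun t : ℝ => 2*t) 2 θ := by
    simpa using (hasDerivAt_id θ).const_mul 2
  have hsin2 : HasDerivAt (fun t : ℝ => Real.sin (2*t)) (Real.cos (2*θ) * 2) θ :=
    (Real.hasDerivAt_sin (2*θ)).comp θ h2t
  have hgd : HasDerivAt (fun t : ℝ => Real.pi - 2*t - Real.sin (2*t))
      (0 - 2 - Real.cos (2*θ) * 2) θ :=
    ((hasDerivAt_const θ Real.pi).sub h2t).sub hsin2
  have hqd : HasDerivAt (fun t : ℝ => ((2 / Real.pi) * (Real.pi - 2*t - Real.sin (2*t)))^2)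
      (2 * ((2 / Real.pi) * (Real.pi - 2*θ - Real.sin (2*θ)))^1 *
        ((2 / Real.pi) * (0 - 2 - Real.cos (2*θ) * 2))) θ :=
    (hgd.const_mul (2 / Real.pi)).pow 2
  have hnum : HasDerivAt (fun t : ℝ => 1 / (2 * Real.sin t) + Real.sin t / 2 - 1)
      ((0 * (2 * Real.sin θ) - 1 * (2 * Real.cos θ)) / (2 * Real.sin θ)^2 + Real.cos θ / 2) θ := by
    have := (((hasDerivAt_const θ (1:ℝ)).div ((Real.hasDerivAt_sin θ).const_mul 2) hden).add
      ((Real.hasDerivAt_sin θ).div_const 2)).sub_const 1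
    simpa using this
  have hf : HasDerivAt (fun t : ℝ =>
        (1 / (2 * Real.sin t) + Real.sin t / 2 - 1) /
          ((2 / Real.pi) * (Real.pi - 2*t - Real.sin (2*t)))^2) _ θ := hnum.div hqd hq0
  rw [hf.deriv, Real.cos_two_mul]
  have hpy : Real.sin θ ^ 2 + Real.cos θ ^ 2 = 1 := Real.sin_sq_add_cos_sq θ
  set s := Real.sin θ with hsdef
  set c := Real.cos θ with hcdef
  generalize hG : Real.pi - 2*θ - Real.sin (2*θ) = g at hg hgne hq0 ⊢
  have hkey : ((0 * (2 * s) - 1 * (2 * c)) / (2 * s)^2 + c / 2) *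
        ((2 / Real.pi) * g)^2 -
        (1 / (2 * s) + s / 2 - 1) *
        (2 * ((2 / Real.pi) * g)^1 * ((2 / Real.pi) * (0 - 2 - (2 * c^2 - 1) * 2))) =
      (c^2 * g / (2 * s^2) * (2/Real.pi)^2) * (8 * s * (1 - s)^2 - c * g) := by
    have h1 : ((2:ℝ)/Real.pi)^2 * g^2 * c / (2 * s^2) * (s^2 + c^2) =
        ((2:ℝ)/Real.pi)^2 * g^2 * c / (2 * s^2) * 1 := by rw [hpy]
    field_simp at h1 ⊢
    linear_combination (g*c) * h1
  rw [hkey, div_eq_zero_iff]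
  have hK : c^2 * g / (2 * s^2) * (2/Real.pi)^2 ≠ 0 := by positivity
  constructor
  · intro h
    rcases h with h | h
    · rcases mul_eq_zero.mp h with h | h
      · exact absurd h hK
      · exact h
    · exact absurd h (pow_ne_zero 2 hq0)
  · intro h
    left
    rw [h, mul_zero]
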